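/- If τ : A ⊗ H → K is a skew pairing between Hopf quasigroups A and H, then τ is convolution invertible with inverse τ⁻¹ = τ ∘ (λ_A ⊗ H), and moreover τ = τ⁻¹ ∘ (A ⊗ λ_H). -/

import Mathlib

open TensorProduct

noncomputable section

/-- A Hopf quasigroup over a commutative ring `R` (Klim–Majid), given by a unital magma
and comonoid structure on `H` whose counit and comultiplication are unital magma morphisms,
together with an antipode satisfying the four Hopf quasigroup identities. -/
structure HopfQuasigroup (R : Type*) [CommRing R] (H : Type*) [AddCommGroup H] [Module R H] :
    Type _ where
  mul : H ⊗[R] H →ₗ[R] H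
  unit : H
  counit : H →ₗ[R] R
  comul : H →ₗ[R] H ⊗[R] H
  antipode : H →ₗ[R] H
  mul_unit_left : ∀ h : H, mul (unit ⊗ₜ[R] h) = h
  mul_unit_right : ∀ h : H, mul (h ⊗ₜ[R] unit) = h
  coassoc : (TensorProduct.assoc R H H H).toLinearMap ∘ₗ comul.rTensor H ∘ₗ comul
      = comul.lTensor H ∘ₗ comul
  counit_left : (TensorProduct.lid R H).toLinearMap ∘ₗ counit.rTensor H ∘ₗ comul = LinearMap.id
  counit_right : (TensorProduct.rid R H).toLinearMap ∘ₗ counit.lTensor H ∘ₗ comul = LinearMap.id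
  counit_unit : counit unit = 1
  counit_mul : counit ∘ₗ mul
      = (TensorProduct.lid R R).toLinearMap ∘ₗ TensorProduct.map counit counit
  comul_unit : comul unit = unit ⊗ₜ[R] unit
  comul_mul : comul ∘ₗ mul = TensorProduct.map mul mul
      ∘ₗ (TensorProduct.tensorTensorTensorComm R H H H H).toLinearMap
      ∘ₗ TensorProduct.map comul comul
  antipode_lH₁ : mul ∘ₗ TensorProduct.map antipode mul
      ∘ₗ (TensorProduct.assoc R H H H).toLinearMap ∘ₗ comul.rTensor H
      = (TensorProduct.lid R H).toLinearMap ∘ₗ counit.rTensor H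
  antipode_lH₂ : mul ∘ₗ mul.lTensor H ∘ₗ (antipode.rTensor H).lTensor H
      ∘ₗ (TensorProduct.assoc R H H H).toLinearMap ∘ₗ comul.rTensor H
      = (TensorProduct.lid R H).toLinearMap ∘ₗ counit.rTensor H
  antipode_rH₁ : mul ∘ₗ mul.rTensor H ∘ₗ (TensorProduct.assoc R H H H).symm.toLinearMap
      ∘ₗ (antipode.rTensor H).lTensor H ∘ₗ comul.lTensor H
      = (TensorProduct.rid R H).toLinearMap ∘ₗ counit.lTensor H
  antipode_rH₂ : mul ∘ₗ TensorProduct.map mul antipode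
      ∘ₗ (TensorProduct.assoc R H H H).symm.toLinearMap ∘ₗ comul.lTensor H
      = (TensorProduct.rid R H).toLinearMap ∘ₗ counit.lTensor H

section SkewPairing

variable {R : Type*} [CommRing R] {A H : Type*}
  [AddCommGroup A] [Module R A] [AddCommGroup H] [Module R H]

/-- The tensor product comonoid comultiplication on `A ⊗ H`. -/
def comulT (hA : HopfQuasigroup R A) (hH : HopfQuasigroup R H) :
    A ⊗[R] H →ₗ[R] (A ⊗[R] H) ⊗[R] (A ⊗[R] H) :=
  (TensorProduct.tensorTensorTensorComm R A A H H).toLinearMap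
    ∘ₗ TensorProduct.map hA.comul hH.comul

/-- The tensor product comonoid counit on `A ⊗ H`. -/
def counitT (hA : HopfQuasigroup R A) (hH : HopfQuasigroup R H) : A ⊗[R] H →ₗ[R] R :=
  (TensorProduct.lid R R).toLinearMap ∘ₗ TensorProduct.map hA.counit hH.counit

/-- Convolution product of morphisms `A ⊗ H → R` with respect to the tensor product
comonoid structure. -/
def conv (hA : HopfQuasigroup R A) (hH : HopfQuasigroup R H)
    (f g : A ⊗[R] H →ₗ[R] R) : A ⊗[R] H →ₗ[R] R :=
  (TensorProduct.lid R R).toLinearMap ∘ₗ TensorProduct.map f g ∘ₗ comulT hA hH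

/-- `τ : A ⊗ H → R` is a skew pairing between the Hopf quasigroups `A` and `H`. -/
def IsSkewPairing (hA : HopfQuasigroup R A) (hH : HopfQuasigroup R H)
    (τ : A ⊗[R] H →ₗ[R] R) : Prop :=
  (τ ∘ₗ hA.mul.rTensor H
      = (TensorProduct.lid R R).toLinearMap ∘ₗ TensorProduct.map τ τ
        ∘ₗ (TensorProduct.tensorTensorTensorComm R A A H H).toLinearMap
        ∘ₗ hH.comul.lTensor (A ⊗[R] A)) ∧
  (τ ∘ₗ hH.mul.lTensor A
      = (TensorProduct.lid R R).toLinearMap ∘ₗ TensorProduct.map τ τ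
        ∘ₗ (TensorProduct.tensorTensorTensorComm R A A H H).toLinearMap
        ∘ₗ (((TensorProduct.comm R A A).toLinearMap ∘ₗ hA.comul).rTensor (H ⊗[R] H))) ∧
  (∀ a : A, τ (a ⊗ₜ[R] hH.unit) = hA.counit a) ∧
  (∀ h : H, τ (hA.unit ⊗ₜ[R] h) = hH.counit h)

end SkewPairing

section AuxNat

variable {R : Type*} [CommRing R]
variable {M N P Q M' N' P' Q' : Type*}
  [AddCommGroup M] [Module R M] [AddCommGroup N] [Module R N]
  [AddCommGroup P] [Module R P] [AddCommGroup Q] [Module R Q]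
  [AddCommGroup M'] [Module R M'] [AddCommGroup N'] [Module R N']
  [AddCommGroup P'] [Module R P'] [AddCommGroup Q'] [Module R Q']

lemma ttt_nat (f : M →ₗ[R] M') (g : N →ₗ[R] N') (p : P →ₗ[R] P') (q : Q →ₗ[R] Q') :
    (TensorProduct.tensorTensorTensorComm R M' N' P' Q').toLinearMap
        ∘ₗ TensorProduct.map (TensorProduct.map f g) (TensorProduct.map p q)
      = TensorProduct.map (TensorProduct.map f p) (TensorProduct.map g q)
        ∘ₗ (TensorProduct.tensorTensorTensorComm R M N P Q).toLinearMap := by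
  ext m n p q
  rfl

lemma lidsymm_nat (f : M →ₗ[R] N) :
    TensorProduct.map LinearMap.id f ∘ₗ (TensorProduct.lid R M).symm.toLinearMap
      = (TensorProduct.lid R N).symm.toLinearMap ∘ₗ f := by
  ext m; simp

lemma ridsymm_nat (f : M →ₗ[R] N) :
    TensorProduct.map f LinearMap.id ∘ₗ (TensorProduct.rid R M).symm.toLinearMap
      = (TensorProduct.rid R N).symm.toLinearMap ∘ₗ f := by
  ext m; simp

lemma rT_eq (f : M →ₗ[R] N) : f.rTensor P = TensorProduct.map f LinearMap.id := rfl
lemma lT_eq (f : M →ₗ[R] N) : f.lTensor P = TensorProduct.map LinearMap.id f := rfl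

end AuxNat


namespace HopfQuasigroup

variable {R : Type*} [CommRing R] {H : Type*} [AddCommGroup H] [Module R H]
variable (hq : HopfQuasigroup R H)

/-- `ε ⊗ δ = lid.symm` -/
lemma counit_rT_comul :
    hq.counit.rTensor H ∘ₗ hq.comul = (TensorProduct.lid R H).symm.toLinearMap := by
  apply LinearMap.ext; intro h
  apply (TensorProduct.lid R H).injective
  have := LinearMap.congr_fun hq.counit_left h
  simpa using this

lemma counit_lT_comul :
    hq.counit.lTensor H ∘ₗ hq.comul = (TensorProduct.rid R H).symm.toLinearMap := by
  apply LinearMap.ext; intro h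
  apply (TensorProduct.rid R H).injective
  have := LinearMap.congr_fun hq.counit_right h
  simpa using this

/-- coassociativity, `rTensor` form -/
lemma comul_rT_comul :
    hq.comul.rTensor H ∘ₗ hq.comul
      = (TensorProduct.assoc R H H H).symm.toLinearMap ∘ₗ hq.comul.lTensor H ∘ₗ hq.comul := by
  rw [← hq.coassoc]
  apply LinearMap.ext; intro h
  simp

/-- `μ ∘ (λ ⊗ id) ∘ δ = η ∘ ε` -/
lemma mul_antipode_rT_comul :
    hq.mul ∘ₗ hq.antipode.rTensor H ∘ₗ hq.comul
      = LinearMap.toSpanSingleton R H hq.unit ∘ₗ hq.counit := by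
  apply LinearMap.ext; intro h
  have key : ∀ t : H ⊗[R] H,
      hq.mul (TensorProduct.map hq.antipode hq.mul
        ((TensorProduct.assoc R H H H) (t ⊗ₜ[R] hq.unit)))
      = hq.mul (hq.antipode.rTensor H t) := by
    intro t
    induction t using TensorProduct.induction_on with
    | zero => simp
    | tmul x y => simp [hq.mul_unit_right]
    | add a b ha hb => simp only [TensorProduct.add_tmul, map_add, ha, hb]
  have ax := LinearMap.congr_fun hq.antipode_lH₁ (h ⊗ₜ[R] hq.unit)
  simp only [LinearMap.comp_apply, LinearMap.rTensor_tmul, LinearEquiv.coe_coe] at ax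
  rw [key] at ax
  simpa [LinearMap.toSpanSingleton_apply] using ax

/-- `μ ∘ (id ⊗ λ) ∘ δ = η ∘ ε` -/
lemma mul_antipode_lT_comul :
    hq.mul ∘ₗ hq.antipode.lTensor H ∘ₗ hq.comul
      = LinearMap.toSpanSingleton R H hq.unit ∘ₗ hq.counit := by
  apply LinearMap.ext; intro h
  have key : ∀ t : H ⊗[R] H,
      hq.mul (TensorProduct.map hq.mul hq.antipode
        ((TensorProduct.assoc R H H H).symm (hq.unit ⊗ₜ[R] t)))
      = hq.mul (hq.antipode.lTensor H t) := by
    intro t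
    induction t using TensorProduct.induction_on with
    | zero => simp
    | tmul x y => simp [hq.mul_unit_left]
    | add a b ha hb => simp only [TensorProduct.tmul_add, map_add, ha, hb]
  have ax := LinearMap.congr_fun hq.antipode_rH₂ (hq.unit ⊗ₜ[R] h)
  simp only [LinearMap.comp_apply, LinearMap.lTensor_tmul, LinearEquiv.coe_coe] at ax
  rw [key] at ax
  simpa [LinearMap.toSpanSingleton_apply] using ax

/-- `ε ∘ λ = ε` -/
lemma counit_antipode : hq.counit ∘ₗ hq.antipode = hq.counit := by
  have key : ∀ f : H →ₗ[R] R,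
      (TensorProduct.lid R R).toLinearMap ∘ₗ TensorProduct.map f hq.counit ∘ₗ hq.comul = f := by
    intro f
    have h1 : TensorProduct.map f hq.counit
        = TensorProduct.map f LinearMap.id ∘ₗ hq.counit.lTensor H := by
      apply TensorProduct.ext'; intro x y; rfl
    rw [h1, LinearMap.comp_assoc, hq.counit_lT_comul]
    apply LinearMap.ext; intro h
    simp
  have h2 : TensorProduct.map hq.counit hq.counit ∘ₗ hq.antipode.rTensor H
      = TensorProduct.map (hq.counit ∘ₗ hq.antipode) hq.counit := by
    apply TensorProduct.ext'; intro x y; rfl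
  have e1 : hq.counit ∘ₗ hq.mul ∘ₗ hq.antipode.rTensor H ∘ₗ hq.comul
      = (TensorProduct.lid R R).toLinearMap
        ∘ₗ TensorProduct.map (hq.counit ∘ₗ hq.antipode) hq.counit ∘ₗ hq.comul := by
    calc hq.counit ∘ₗ hq.mul ∘ₗ hq.antipode.rTensor H ∘ₗ hq.comul
        = (hq.counit ∘ₗ hq.mul) ∘ₗ (hq.antipode.rTensor H ∘ₗ hq.comul) := by
          simp only [LinearMap.comp_assoc]
      _ = ((TensorProduct.lid R R).toLinearMap ∘ₗ TensorProduct.map hq.counit hq.counit)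
            ∘ₗ (hq.antipode.rTensor H ∘ₗ hq.comul) := by rw [hq.counit_mul]
      _ = (TensorProduct.lid R R).toLinearMap
            ∘ₗ (TensorProduct.map hq.counit hq.counit ∘ₗ hq.antipode.rTensor H) ∘ₗ hq.comul := by
          simp only [LinearMap.comp_assoc]
      _ = (TensorProduct.lid R R).toLinearMap
            ∘ₗ TensorProduct.map (hq.counit ∘ₗ hq.antipode) hq.counit ∘ₗ hq.comul := by rw [h2]
  have e2 : hq.counit ∘ₗ hq.mul ∘ₗ hq.antipode.rTensor H ∘ₗ hq.comul = hq.counit := by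
    rw [hq.mul_antipode_rT_comul]
    apply LinearMap.ext; intro h
    simp [LinearMap.toSpanSingleton_apply, hq.counit_unit]
  rw [← key (hq.counit ∘ₗ hq.antipode), ← e1, e2]

end HopfQuasigroup

section L4

variable {R : Type*} [CommRing R] {H : Type*} [AddCommGroup H] [Module R H]
variable (hq : HopfQuasigroup R H)

namespace HopfQuasigroup

/-- componentwise multiplication on `H ⊗ H` -/
def cwM : (H ⊗[R] H) ⊗[R] (H ⊗[R] H) →ₗ[R] H ⊗[R] H :=
  TensorProduct.map hq.mul hq.mul ∘ₗ (TensorProduct.tensorTensorTensorComm R H H H H).toLinearMap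

/-- `c ∘ (λ ⊗ λ)` -/
def GM : H ⊗[R] H →ₗ[R] H ⊗[R] H :=
  (TensorProduct.comm R H H).toLinearMap ∘ₗ TensorProduct.map hq.antipode hq.antipode

/-- `(x ⊗ (y ⊗ z)) ↦ (x y) λ(z)` -/
def GaM : H ⊗[R] (H ⊗[R] H) →ₗ[R] H :=
  hq.mul ∘ₗ TensorProduct.map hq.mul hq.antipode
    ∘ₗ (TensorProduct.assoc R H H H).symm.toLinearMap

/-- the main auxiliary morphism -/
def XM : H →ₗ[R] H ⊗[R] H :=
  hq.cwM ∘ₗ TensorProduct.map (hq.comul ∘ₗ (hq.mul ∘ₗ hq.antipode.rTensor H)) hq.GM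
    ∘ₗ TensorProduct.map hq.comul hq.comul ∘ₗ hq.comul

lemma cwM_eta : ∀ s : H ⊗[R] H, hq.cwM ((hq.unit ⊗ₜ[R] hq.unit) ⊗ₜ[R] s) = s := by
  intro s
  induction s using TensorProduct.induction_on with
  | zero => simp
  | tmul x y => simp [cwM, hq.mul_unit_left]
  | add a b ha hb => simp only [TensorProduct.tmul_add, map_add, ha, hb]

lemma XM_way1 : hq.XM = hq.GM ∘ₗ hq.comul := by
  have hFδ : ∀ x : H,
      (hq.comul ∘ₗ (hq.mul ∘ₗ hq.antipode.rTensor H)) (hq.comul x)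
        = hq.counit x • (hq.unit ⊗ₜ[R] hq.unit) := by
    intro x
    have h1 := LinearMap.congr_fun hq.mul_antipode_rT_comul x
    simp only [LinearMap.comp_apply] at h1 ⊢
    rw [h1]
    simp [LinearMap.toSpanSingleton_apply, hq.comul_unit]
  have main : ∀ t : H ⊗[R] H,
      hq.cwM (TensorProduct.map (hq.comul ∘ₗ (hq.mul ∘ₗ hq.antipode.rTensor H)) hq.GM
        (TensorProduct.map hq.comul hq.comul t))
      = hq.GM (hq.comul ((TensorProduct.lid R H) (hq.counit.rTensor H t))) := by
    intro t
    induction t using TensorProduct.induction_on with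
    | zero => simp
    | tmul x y =>
        simp only [TensorProduct.map_tmul, LinearMap.rTensor_tmul]
        rw [hFδ x, ← TensorProduct.smul_tmul', map_smul,
          hq.cwM_eta (hq.GM (hq.comul y))]
        simp [map_smul]
    | add a b ha hb => simp only [map_add, ha, hb]
  apply LinearMap.ext; intro h
  have e0 : hq.XM h
      = hq.cwM (TensorProduct.map (hq.comul ∘ₗ (hq.mul ∘ₗ hq.antipode.rTensor H)) hq.GM
          (TensorProduct.map hq.comul hq.comul (hq.comul h))) := by
    simp only [XM, LinearMap.comp_apply]
  rw [e0, main (hq.comul h)]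
  have h2 := LinearMap.congr_fun hq.counit_left h
  simp only [LinearMap.comp_apply, LinearEquiv.coe_coe, LinearMap.id_apply] at h2
  rw [h2]
  simp only [LinearMap.comp_apply]

end HopfQuasigroup

end L4

namespace HopfQuasigroup

section Way2

variable {R : Type*} [CommRing R] {H : Type*} [AddCommGroup H] [Module R H]
variable (hq : HopfQuasigroup R H)

lemma map_map_apply {M N P Q M' N' : Type*}
    [AddCommGroup M] [Module R M] [AddCommGroup N] [Module R N]
    [AddCommGroup P] [Module R P] [AddCommGroup Q] [Module R Q]
    [AddCommGroup M'] [Module R M'] [AddCommGroup N'] [Module R N']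
    (A : M' →ₗ[R] P) (B : N' →ₗ[R] Q) (C : M →ₗ[R] M') (D : N →ₗ[R] N') (v : M ⊗[R] N) :
    TensorProduct.map A B (TensorProduct.map C D v)
      = TensorProduct.map (A ∘ₗ C) (B ∘ₗ D) v := by
  rw [← LinearMap.comp_apply, ← TensorProduct.map_comp]

lemma lT_split {M N P Q : Type*}
    [AddCommGroup M] [Module R M] [AddCommGroup N] [Module R N]
    [AddCommGroup P] [Module R P] [AddCommGroup Q] [Module R Q]
    (A : P →ₗ[R] Q) (B : N →ₗ[R] P) :
    TensorProduct.map (LinearMap.id : M →ₗ[R] M) (A ∘ₗ B)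
      = TensorProduct.map LinearMap.id A ∘ₗ TensorProduct.map LinearMap.id B := by
  rw [← TensorProduct.map_comp, LinearMap.id_comp]

lemma rT_split {M N P Q : Type*}
    [AddCommGroup M] [Module R M] [AddCommGroup N] [Module R N]
    [AddCommGroup P] [Module R P] [AddCommGroup Q] [Module R Q]
    (A : P →ₗ[R] Q) (B : N →ₗ[R] P) :
    TensorProduct.map (A ∘ₗ B) (LinearMap.id : M →ₗ[R] M)
      = TensorProduct.map A LinearMap.id ∘ₗ TensorProduct.map B LinearMap.id := by
  rw [← TensorProduct.map_comp, LinearMap.id_comp]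

lemma lT_assoc_symm_apply {M N P P' : Type*}
    [AddCommGroup M] [Module R M] [AddCommGroup N] [Module R N]
    [AddCommGroup P] [Module R P] [AddCommGroup P'] [Module R P']
    (f : P →ₗ[R] P') (x : M ⊗[R] (N ⊗[R] P)) :
    TensorProduct.map (LinearMap.id : M ⊗[R] N →ₗ[R] M ⊗[R] N) f
        ((TensorProduct.assoc R M N P).symm x)
      = (TensorProduct.assoc R M N P').symm
          (TensorProduct.map LinearMap.id (TensorProduct.map LinearMap.id f) x) := by
  have := TensorProduct.map_map_assoc_symm (LinearMap.id : M →ₗ[R] M)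
    (LinearMap.id : N →ₗ[R] N) f x
  simpa only [TensorProduct.map_id] using this

/-- `δ ∘ μ ∘ (λ ⊗ id) = cw ∘ ((δ∘λ) ⊗ δ)` -/
lemma hdF : hq.comul ∘ₗ (hq.mul ∘ₗ hq.antipode.rTensor H)
    = hq.cwM ∘ₗ TensorProduct.map (hq.comul ∘ₗ hq.antipode) hq.comul := by
  rw [← LinearMap.comp_assoc, hq.comul_mul]
  simp only [cwM, LinearMap.comp_assoc]
  congr 1
  congr 1
  rw [rT_eq, ← TensorProduct.map_comp, LinearMap.comp_id]

/-- PL : `cw ∘ (cw ⊗ G) = (Γ ⊗ Γ) ∘ Perm` -/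
lemma PL : hq.cwM ∘ₗ TensorProduct.map hq.cwM hq.GM
    = TensorProduct.map hq.GaM hq.GaM
      ∘ₗ (TensorProduct.tensorTensorTensorComm R H H (H ⊗[R] H) (H ⊗[R] H)).toLinearMap
      ∘ₗ TensorProduct.map LinearMap.id
          ((TensorProduct.tensorTensorTensorComm R H H H H).toLinearMap
            ∘ₗ TensorProduct.map LinearMap.id (TensorProduct.comm R H H).toLinearMap)
      ∘ₗ (TensorProduct.assoc R (H ⊗[R] H) (H ⊗[R] H) (H ⊗[R] H)).toLinearMap := by
  ext u v x y d e
  simp [cwM, GM, GaM]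

/-- PJ₂ pure shuffle -/
lemma PJ2 :
    (TensorProduct.tensorTensorTensorComm R H H H H).toLinearMap
        ∘ₗ (TensorProduct.assoc R H H (H ⊗[R] H)).symm.toLinearMap
        ∘ₗ TensorProduct.map LinearMap.id
            (TensorProduct.map LinearMap.id (TensorProduct.comm R H H).toLinearMap)
      = (TensorProduct.assoc R H H (H ⊗[R] H)).symm.toLinearMap
        ∘ₗ TensorProduct.map LinearMap.id
            ((TensorProduct.comm R (H ⊗[R] H) H).toLinearMap
              ∘ₗ (TensorProduct.assoc R H H H).symm.toLinearMap) := by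
  ext x y d e
  rfl

/-- CJ : re-association of the comultiplication tree -/
lemma CJ :
    ((TensorProduct.tensorTensorTensorComm R H H H H).toLinearMap
        ∘ₗ TensorProduct.map LinearMap.id (TensorProduct.comm R H H).toLinearMap)
      ∘ₗ TensorProduct.map hq.comul hq.comul ∘ₗ hq.comul
    = TensorProduct.map LinearMap.id hq.comul
      ∘ₗ ((TensorProduct.assoc R H H H).symm.toLinearMap
        ∘ₗ TensorProduct.map LinearMap.id
            ((TensorProduct.comm R H H).toLinearMap ∘ₗ hq.comul)
        ∘ₗ hq.comul) := by
  have co2 : TensorProduct.map hq.comul LinearMap.id ∘ₗ hq.comul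
      = (TensorProduct.assoc R H H H).symm.toLinearMap
        ∘ₗ TensorProduct.map LinearMap.id hq.comul ∘ₗ hq.comul := by
    have := hq.comul_rT_comul
    simpa only [rT_eq, lT_eq] using this
  apply LinearMap.ext; intro k
  simp only [LinearMap.comp_apply, LinearEquiv.coe_coe]
  -- LHS : split map δ δ
  have l1 : TensorProduct.map hq.comul hq.comul (hq.comul k)
      = TensorProduct.map LinearMap.id hq.comul
          (TensorProduct.map hq.comul LinearMap.id (hq.comul k)) := by
    rw [map_map_apply]
    simp only [LinearMap.comp_id, LinearMap.id_comp]
  rw [l1]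
  have co2' := LinearMap.congr_fun co2 k
  simp only [LinearMap.comp_apply, LinearEquiv.coe_coe] at co2'
  rw [co2']
  rw [lT_assoc_symm_apply hq.comul
    (TensorProduct.map LinearMap.id hq.comul (hq.comul k))]
  rw [lT_assoc_symm_apply (TensorProduct.comm R H H).toLinearMap
    (TensorProduct.map LinearMap.id (TensorProduct.map LinearMap.id hq.comul)
      (TensorProduct.map LinearMap.id hq.comul (hq.comul k)))]
  -- RHS : push the outer δ through assoc.symm
  rw [lT_assoc_symm_apply hq.comul
    (TensorProduct.map LinearMap.id ((TensorProduct.comm R H H).toLinearMap ∘ₗ hq.comul)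
      (hq.comul k))]
  -- merge slot-2 chains on both sides
  simp only [map_map_apply, LinearMap.comp_id, LinearMap.id_comp]
  -- rewrite the right slot chain using comm naturality and coassociativity
  have zR : TensorProduct.map LinearMap.id hq.comul
        ∘ₗ ((TensorProduct.comm R H H).toLinearMap ∘ₗ hq.comul)
      = ((TensorProduct.comm R (H ⊗[R] H) H).toLinearMap
          ∘ₗ (TensorProduct.assoc R H H H).symm.toLinearMap)
        ∘ₗ (TensorProduct.map LinearMap.id hq.comul ∘ₗ hq.comul) := by
    rw [← LinearMap.comp_assoc, TensorProduct.map_comp_comm_eq, LinearMap.comp_assoc, co2]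
    simp only [LinearMap.comp_assoc]
  rw [zR]
  -- split off the common tail `map id δ ∘ δ` on both sides
  rw [lT_split (TensorProduct.map LinearMap.id (TensorProduct.comm R H H).toLinearMap)
    (TensorProduct.map LinearMap.id hq.comul ∘ₗ hq.comul)]
  rw [lT_split ((TensorProduct.comm R (H ⊗[R] H) H).toLinearMap
    ∘ₗ (TensorProduct.assoc R H H H).symm.toLinearMap)
    (TensorProduct.map LinearMap.id hq.comul ∘ₗ hq.comul)]
  simp only [LinearMap.comp_apply, LinearEquiv.coe_coe]
  have pj := LinearMap.congr_fun (PJ2 (R := R) (H := H))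
    (TensorProduct.map LinearMap.id (TensorProduct.map LinearMap.id hq.comul ∘ₗ hq.comul)
      (hq.comul k))
  simp only [LinearMap.comp_apply, LinearEquiv.coe_coe] at pj
  exact pj

/-- axiom rH₂ in `Γ` form -/
lemma Ga_lT : hq.GaM ∘ₗ TensorProduct.map LinearMap.id hq.comul
    = (TensorProduct.rid R H).toLinearMap ∘ₗ TensorProduct.map LinearMap.id hq.counit := by
  have ax := hq.antipode_rH₂
  simp only [lT_eq] at ax
  simpa only [GaM, LinearMap.comp_assoc] using ax

/-- `comm ∘ lid.symm = rid.symm` -/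
lemma comm_lid_symm :
    (TensorProduct.comm R R H).toLinearMap ∘ₗ (TensorProduct.lid R H).symm.toLinearMap
      = (TensorProduct.rid R H).symm.toLinearMap := by
  apply LinearMap.ext; intro h
  simp

lemma PR1 :
    (TensorProduct.assoc R H H R).symm.toLinearMap
        ∘ₗ TensorProduct.map LinearMap.id (TensorProduct.rid R H).symm.toLinearMap
      = (TensorProduct.rid R (H ⊗[R] H)).symm.toLinearMap := by
  apply TensorProduct.ext'; intro x y
  rfl

/-- `(id ⊗ ε) ∘ J' = rid.symm ∘ δ` -/
lemma hJ'e :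
    TensorProduct.map LinearMap.id hq.counit
      ∘ₗ ((TensorProduct.assoc R H H H).symm.toLinearMap
        ∘ₗ TensorProduct.map LinearMap.id
            ((TensorProduct.comm R H H).toLinearMap ∘ₗ hq.comul)
        ∘ₗ hq.comul)
    = (TensorProduct.rid R (H ⊗[R] H)).symm.toLinearMap ∘ₗ hq.comul := by
  apply LinearMap.ext; intro k
  simp only [LinearMap.comp_apply, LinearEquiv.coe_coe]
  rw [lT_assoc_symm_apply hq.counit
    (TensorProduct.map LinearMap.id ((TensorProduct.comm R H H).toLinearMap ∘ₗ hq.comul)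
      (hq.comul k))]
  rw [map_map_apply]
  simp only [LinearMap.id_comp]
  have slot : TensorProduct.map LinearMap.id hq.counit
      ∘ₗ ((TensorProduct.comm R H H).toLinearMap ∘ₗ hq.comul)
      = (TensorProduct.rid R H).symm.toLinearMap := by
    rw [← LinearMap.comp_assoc, TensorProduct.map_comp_comm_eq, LinearMap.comp_assoc]
    have : TensorProduct.map hq.counit LinearMap.id ∘ₗ hq.comul
        = (TensorProduct.lid R H).symm.toLinearMap := by
      have := hq.counit_rT_comul
      simpa only [rT_eq] using this
    rw [this, comm_lid_symm]
  rw [slot]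
  have := LinearMap.congr_fun (PR1 (R := R) (H := H)) (hq.comul k)
  simpa only [LinearMap.comp_apply, LinearEquiv.coe_coe] using this

/-- final pure collapse -/
lemma POm :
    TensorProduct.map
        ((TensorProduct.rid R H).toLinearMap ∘ₗ TensorProduct.map LinearMap.id hq.counit)
        (TensorProduct.rid R H).toLinearMap
      ∘ₗ (TensorProduct.tensorTensorTensorComm R H H H R).toLinearMap
      ∘ₗ TensorProduct.map LinearMap.id (TensorProduct.rid R H).symm.toLinearMap
    = (TensorProduct.rid R (H ⊗[R] H)).toLinearMap
      ∘ₗ TensorProduct.map LinearMap.id hq.counit := by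
  ext u v n
  simp [TensorProduct.smul_tmul']

end Way2


end HopfQuasigroup

namespace HopfQuasigroup

section Way2Main

variable {R : Type*} [CommRing R] {H : Type*} [AddCommGroup H] [Module R H]
variable (hq : HopfQuasigroup R H)

lemma XM_way2 : hq.XM = hq.comul ∘ₗ hq.antipode := by
  -- pointwise ttt-naturality instances
  have N1 : ∀ w : (H ⊗[R] H) ⊗[R] ((H ⊗[R] H) ⊗[R] H),
      (TensorProduct.tensorTensorTensorComm R H H (H ⊗[R] H) (H ⊗[R] H))
          (TensorProduct.map LinearMap.id (TensorProduct.map LinearMap.id hq.comul) w)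
        = TensorProduct.map LinearMap.id (TensorProduct.map LinearMap.id hq.comul)
            ((TensorProduct.tensorTensorTensorComm R H H (H ⊗[R] H) H) w) := by
    intro w
    have := LinearMap.congr_fun
      (ttt_nat (LinearMap.id : H →ₗ[R] H) (LinearMap.id : H →ₗ[R] H)
        (LinearMap.id : H ⊗[R] H →ₗ[R] H ⊗[R] H) hq.comul) w
    simpa only [TensorProduct.map_id, LinearMap.comp_apply, LinearEquiv.coe_coe] using this
  have N2 : ∀ w : (H ⊗[R] H) ⊗[R] ((H ⊗[R] H) ⊗[R] H),
      TensorProduct.map LinearMap.id (TensorProduct.map LinearMap.id hq.counit)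
          ((TensorProduct.tensorTensorTensorComm R H H (H ⊗[R] H) H) w)
        = (TensorProduct.tensorTensorTensorComm R H H (H ⊗[R] H) R)
            (TensorProduct.map LinearMap.id (TensorProduct.map LinearMap.id hq.counit) w) := by
    intro w
    have := LinearMap.congr_fun
      (ttt_nat (LinearMap.id : H →ₗ[R] H) (LinearMap.id : H →ₗ[R] H)
        (LinearMap.id : H ⊗[R] H →ₗ[R] H ⊗[R] H) hq.counit) w
    simp only [TensorProduct.map_id, LinearMap.comp_apply, LinearEquiv.coe_coe] at this
    exact this.symm
  have N3 : ∀ w : (H ⊗[R] H) ⊗[R] (H ⊗[R] R),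
      (TensorProduct.tensorTensorTensorComm R H H (H ⊗[R] H) R)
          (TensorProduct.map LinearMap.id (TensorProduct.map hq.comul LinearMap.id) w)
        = TensorProduct.map (TensorProduct.map LinearMap.id hq.comul) LinearMap.id
            ((TensorProduct.tensorTensorTensorComm R H H H R) w) := by
    intro w
    have := LinearMap.congr_fun
      (ttt_nat (LinearMap.id : H →ₗ[R] H) (LinearMap.id : H →ₗ[R] H)
        hq.comul (LinearMap.id : R →ₗ[R] R)) w
    simpa only [TensorProduct.map_id, LinearMap.comp_apply, LinearEquiv.coe_coe] using this
  apply LinearMap.ext; intro h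
  simp only [XM, LinearMap.comp_apply]
  rw [hq.hdF]
  have sp0 : TensorProduct.map
        (hq.cwM ∘ₗ TensorProduct.map (hq.comul ∘ₗ hq.antipode) hq.comul) hq.GM
      = TensorProduct.map hq.cwM hq.GM
        ∘ₗ TensorProduct.map (TensorProduct.map (hq.comul ∘ₗ hq.antipode) hq.comul)
            LinearMap.id := by
    rw [← TensorProduct.map_comp, LinearMap.comp_id]
  rw [sp0]
  simp only [LinearMap.comp_apply]
  have PLa := LinearMap.congr_fun hq.PL
    (TensorProduct.map (TensorProduct.map (hq.comul ∘ₗ hq.antipode) hq.comul) LinearMap.id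
      (TensorProduct.map hq.comul hq.comul (hq.comul h)))
  simp only [LinearMap.comp_apply, LinearEquiv.coe_coe] at PLa
  rw [PLa]
  -- re-associate the δ-tree
  have T1 : TensorProduct.map (TensorProduct.map (hq.comul ∘ₗ hq.antipode) hq.comul)
        LinearMap.id (TensorProduct.map hq.comul hq.comul (hq.comul h))
      = TensorProduct.map (TensorProduct.map (hq.comul ∘ₗ hq.antipode) LinearMap.id)
          LinearMap.id
          (TensorProduct.map (TensorProduct.map LinearMap.id hq.comul) hq.comul
            (TensorProduct.map hq.comul LinearMap.id (hq.comul h))) := by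
    simp only [map_map_apply]
    congr 2
    rw [← LinearMap.comp_assoc, ← TensorProduct.map_comp, LinearMap.comp_id,
      LinearMap.id_comp]
  rw [T1]
  rw [← TensorProduct.map_map_assoc]
  simp only [TensorProduct.map_id]
  rw [← TensorProduct.map_map_assoc]
  have co0 : (TensorProduct.assoc R H H H)
        (TensorProduct.map hq.comul LinearMap.id (hq.comul h))
      = TensorProduct.map LinearMap.id hq.comul (hq.comul h) := by
    have := LinearMap.congr_fun hq.coassoc h
    simpa only [LinearMap.comp_apply, rT_eq, lT_eq, LinearEquiv.coe_coe] using this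
  rw [co0]
  rw [map_map_apply, map_map_apply, map_map_apply]
  simp only [LinearMap.comp_id, LinearMap.id_comp, LinearMap.comp_assoc]
  have CJ' := hq.CJ
  simp only [LinearMap.comp_assoc] at CJ'
  rw [CJ']
  have sp1 : TensorProduct.map (hq.comul ∘ₗ hq.antipode)
        (TensorProduct.map LinearMap.id hq.comul ∘ₗ
          (TensorProduct.assoc R H H H).symm.toLinearMap ∘ₗ
            TensorProduct.map LinearMap.id
              ((TensorProduct.comm R H H).toLinearMap ∘ₗ hq.comul) ∘ₗ hq.comul)
      = TensorProduct.map LinearMap.id (TensorProduct.map LinearMap.id hq.comul)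
        ∘ₗ TensorProduct.map (hq.comul ∘ₗ hq.antipode)
            ((TensorProduct.assoc R H H H).symm.toLinearMap ∘ₗ
              TensorProduct.map LinearMap.id
                ((TensorProduct.comm R H H).toLinearMap ∘ₗ hq.comul) ∘ₗ hq.comul) := by
    rw [← TensorProduct.map_comp, LinearMap.id_comp]
  rw [sp1]
  simp only [LinearMap.comp_apply]
  rw [N1]
  rw [map_map_apply]
  simp only [LinearMap.comp_id, LinearMap.id_comp]
  rw [hq.Ga_lT]
  have sp2 : TensorProduct.map hq.GaM
        ((TensorProduct.rid R H).toLinearMap ∘ₗ TensorProduct.map LinearMap.id hq.counit)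
      = TensorProduct.map hq.GaM (TensorProduct.rid R H).toLinearMap
        ∘ₗ TensorProduct.map LinearMap.id (TensorProduct.map LinearMap.id hq.counit) := by
    rw [← TensorProduct.map_comp, LinearMap.comp_id]
  rw [sp2]
  simp only [LinearMap.comp_apply]
  rw [N2]
  rw [map_map_apply]
  simp only [LinearMap.comp_id, LinearMap.id_comp]
  rw [hq.hJ'e]
  rw [← ridsymm_nat hq.comul]
  have sp3 : TensorProduct.map (hq.comul ∘ₗ hq.antipode)
        (TensorProduct.map hq.comul LinearMap.id ∘ₗ (TensorProduct.rid R H).symm.toLinearMap)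
      = TensorProduct.map LinearMap.id (TensorProduct.map hq.comul LinearMap.id)
        ∘ₗ TensorProduct.map (hq.comul ∘ₗ hq.antipode)
            (TensorProduct.rid R H).symm.toLinearMap := by
    rw [← TensorProduct.map_comp, LinearMap.id_comp]
  rw [sp3]
  simp only [LinearMap.comp_apply]
  rw [N3]
  rw [map_map_apply]
  simp only [LinearMap.comp_id, LinearMap.id_comp]
  rw [hq.Ga_lT]
  have sp4 : TensorProduct.map (hq.comul ∘ₗ hq.antipode)
        (TensorProduct.rid R H).symm.toLinearMap
      = TensorProduct.map LinearMap.id (TensorProduct.rid R H).symm.toLinearMap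
        ∘ₗ TensorProduct.map (hq.comul ∘ₗ hq.antipode) LinearMap.id := by
    rw [← TensorProduct.map_comp, LinearMap.id_comp, LinearMap.comp_id]
  rw [sp4]
  simp only [LinearMap.comp_apply]
  have pom := LinearMap.congr_fun hq.POm
    (TensorProduct.map (hq.comul ∘ₗ hq.antipode) LinearMap.id (hq.comul h))
  simp only [LinearMap.comp_apply, LinearEquiv.coe_coe] at pom
  rw [pom]
  rw [map_map_apply]
  simp only [LinearMap.comp_id, LinearMap.id_comp]
  have sp5 : TensorProduct.map (hq.comul ∘ₗ hq.antipode) hq.counit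
      = TensorProduct.map (hq.comul ∘ₗ hq.antipode) LinearMap.id
        ∘ₗ TensorProduct.map LinearMap.id hq.counit := by
    rw [← TensorProduct.map_comp, LinearMap.comp_id, LinearMap.id_comp]
  rw [sp5]
  simp only [LinearMap.comp_apply]
  have cr : TensorProduct.map LinearMap.id hq.counit (hq.comul h)
      = (TensorProduct.rid R H).symm h := by
    have := LinearMap.congr_fun hq.counit_lT_comul h
    simpa only [LinearMap.comp_apply, lT_eq, LinearEquiv.coe_coe] using this
  rw [cr]
  have rn := LinearMap.congr_fun (ridsymm_nat (hq.comul ∘ₗ hq.antipode)) h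
  simp only [LinearMap.comp_apply, LinearEquiv.coe_coe] at rn
  rw [rn]
  simp

end Way2Main

end HopfQuasigroup

namespace HopfQuasigroup

variable {R : Type*} [CommRing R] {H : Type*} [AddCommGroup H] [Module R H]
variable (hq : HopfQuasigroup R H)

/-- the antipode is anticomultiplicative -/
lemma comul_antipode : hq.comul ∘ₗ hq.antipode
    = (TensorProduct.comm R H H).toLinearMap
      ∘ₗ TensorProduct.map hq.antipode hq.antipode ∘ₗ hq.comul := by
  rw [← hq.XM_way2, hq.XM_way1]
  simp only [GM, LinearMap.comp_assoc]

lemma comm_comp_comm :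
    (TensorProduct.comm R H H).toLinearMap ∘ₗ (TensorProduct.comm R H H).toLinearMap
      = LinearMap.id := by
  apply TensorProduct.ext'; intro x y; rfl

/-- `(λ ⊗ λ) ∘ δ = comm ∘ δ ∘ λ` -/
lemma map_antipode_comul :
    TensorProduct.map hq.antipode hq.antipode ∘ₗ hq.comul
      = (TensorProduct.comm R H H).toLinearMap ∘ₗ hq.comul ∘ₗ hq.antipode := by
  rw [hq.comul_antipode, ← LinearMap.comp_assoc, ← LinearMap.comp_assoc]
  rw [comm_comp_comm]
  simp only [LinearMap.id_comp, LinearMap.comp_assoc]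

end HopfQuasigroup


section ConvLemmas

variable {R : Type*} [CommRing R] {A H : Type*}
  [AddCommGroup A] [Module R A] [AddCommGroup H] [Module R H]
variable (hA : HopfQuasigroup R A) (hH : HopfQuasigroup R H)

open HopfQuasigroup

lemma conv_counitT_right (f : A ⊗[R] H →ₗ[R] R) :
    conv hA hH f (counitT hA hH) = f := by
  have key : (TensorProduct.lid R R).toLinearMap ∘ₗ TensorProduct.map f (counitT hA hH)
        ∘ₗ (TensorProduct.tensorTensorTensorComm R A A H H).toLinearMap
      = f ∘ₗ TensorProduct.map
          ((TensorProduct.rid R A).toLinearMap ∘ₗ hA.counit.lTensor A)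
          ((TensorProduct.rid R H).toLinearMap ∘ₗ hH.counit.lTensor H) := by
    ext a b x y
    simp [counitT, TensorProduct.smul_tmul', TensorProduct.tmul_smul, mul_comm]
    rw [← TensorProduct.smul_tmul', ← TensorProduct.smul_tmul', map_smul, map_smul,
      smul_eq_mul, smul_eq_mul]
    ring
  have e : conv hA hH f (counitT hA hH)
      = ((TensorProduct.lid R R).toLinearMap ∘ₗ TensorProduct.map f (counitT hA hH)
          ∘ₗ (TensorProduct.tensorTensorTensorComm R A A H H).toLinearMap)
        ∘ₗ TensorProduct.map hA.comul hH.comul := by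
    simp only [conv, comulT, LinearMap.comp_assoc]
  rw [e, key, LinearMap.comp_assoc, ← TensorProduct.map_comp]
  simp only [LinearMap.comp_assoc, hA.counit_right, hH.counit_right]
  simp [TensorProduct.map_id]

lemma conv_counitT_left (g : A ⊗[R] H →ₗ[R] R) :
    conv hA hH (counitT hA hH) g = g := by
  have key : (TensorProduct.lid R R).toLinearMap ∘ₗ TensorProduct.map (counitT hA hH) g
        ∘ₗ (TensorProduct.tensorTensorTensorComm R A A H H).toLinearMap
      = g ∘ₗ TensorProduct.map
          ((TensorProduct.lid R A).toLinearMap ∘ₗ hA.counit.rTensor A)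
          ((TensorProduct.lid R H).toLinearMap ∘ₗ hH.counit.rTensor H) := by
    ext a b x y
    simp [counitT, TensorProduct.smul_tmul', TensorProduct.tmul_smul, mul_comm]
    rw [← TensorProduct.smul_tmul', ← TensorProduct.smul_tmul', map_smul, map_smul,
      smul_eq_mul, smul_eq_mul]
    ring
  have e : conv hA hH (counitT hA hH) g
      = ((TensorProduct.lid R R).toLinearMap ∘ₗ TensorProduct.map (counitT hA hH) g
          ∘ₗ (TensorProduct.tensorTensorTensorComm R A A H H).toLinearMap)
        ∘ₗ TensorProduct.map hA.comul hH.comul := by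
    simp only [conv, comulT, LinearMap.comp_assoc]
  rw [e, key, LinearMap.comp_assoc, ← TensorProduct.map_comp]
  simp only [LinearMap.comp_assoc, hA.counit_left, hH.counit_left]
  simp [TensorProduct.map_id]

lemma conv_assoc (f g k : A ⊗[R] H →ₗ[R] R) :
    conv hA hH (conv hA hH f g) k = conv hA hH f (conv hA hH g k) := by
  have PCA : (TensorProduct.lid R R).toLinearMap
        ∘ₗ TensorProduct.map ((TensorProduct.lid R R).toLinearMap
            ∘ₗ TensorProduct.map f g
            ∘ₗ (TensorProduct.tensorTensorTensorComm R A A H H).toLinearMap) k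
        ∘ₗ (TensorProduct.tensorTensorTensorComm R (A ⊗[R] A) A (H ⊗[R] H) H).toLinearMap
        ∘ₗ TensorProduct.map (TensorProduct.assoc R A A A).symm.toLinearMap
            (TensorProduct.assoc R H H H).symm.toLinearMap
      = (TensorProduct.lid R R).toLinearMap
        ∘ₗ TensorProduct.map f ((TensorProduct.lid R R).toLinearMap
            ∘ₗ TensorProduct.map g k
            ∘ₗ (TensorProduct.tensorTensorTensorComm R A A H H).toLinearMap)
        ∘ₗ (TensorProduct.tensorTensorTensorComm R A (A ⊗[R] A) H (H ⊗[R] H)).toLinearMap := by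
    ext a b x y
    simp [mul_assoc]
  -- pointwise naturality instances
  have NA1 : ∀ w : (A ⊗[R] A) ⊗[R] (H ⊗[R] H),
      TensorProduct.map (TensorProduct.map hA.comul hH.comul) LinearMap.id
          ((TensorProduct.tensorTensorTensorComm R A A H H) w)
        = (TensorProduct.tensorTensorTensorComm R (A ⊗[R] A) A (H ⊗[R] H) H)
            (TensorProduct.map (TensorProduct.map hA.comul LinearMap.id)
              (TensorProduct.map hH.comul LinearMap.id) w) := by
    intro w
    have := LinearMap.congr_fun
      (ttt_nat hA.comul (LinearMap.id : A →ₗ[R] A) hH.comul (LinearMap.id : H →ₗ[R] H)) w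
    simp only [TensorProduct.map_id, LinearMap.comp_apply, LinearEquiv.coe_coe] at this
    exact this.symm
  have NA2 : ∀ w : (A ⊗[R] A) ⊗[R] (H ⊗[R] H),
      TensorProduct.map LinearMap.id (TensorProduct.map hA.comul hH.comul)
          ((TensorProduct.tensorTensorTensorComm R A A H H) w)
        = (TensorProduct.tensorTensorTensorComm R A (A ⊗[R] A) H (H ⊗[R] H))
            (TensorProduct.map (TensorProduct.map LinearMap.id hA.comul)
              (TensorProduct.map LinearMap.id hH.comul) w) := by
    intro w
    have := LinearMap.congr_fun
      (ttt_nat (LinearMap.id : A →ₗ[R] A) hA.comul (LinearMap.id : H →ₗ[R] H) hH.comul) w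
    simp only [TensorProduct.map_id, LinearMap.comp_apply, LinearEquiv.coe_coe] at this
    exact this.symm
  have coA : TensorProduct.map hA.comul LinearMap.id ∘ₗ hA.comul
      = (TensorProduct.assoc R A A A).symm.toLinearMap
        ∘ₗ TensorProduct.map LinearMap.id hA.comul ∘ₗ hA.comul := by
    have := hA.comul_rT_comul
    simpa only [rT_eq, lT_eq] using this
  have coH : TensorProduct.map hH.comul LinearMap.id ∘ₗ hH.comul
      = (TensorProduct.assoc R H H H).symm.toLinearMap
        ∘ₗ TensorProduct.map LinearMap.id hH.comul ∘ₗ hH.comul := by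
    have := hH.comul_rT_comul
    simpa only [rT_eq, lT_eq] using this
  apply LinearMap.ext; intro c
  simp only [conv, comulT, LinearMap.comp_apply, LinearEquiv.coe_coe]
  -- left hand side
  have spL : TensorProduct.map
        ((TensorProduct.lid R R).toLinearMap ∘ₗ TensorProduct.map f g
          ∘ₗ (TensorProduct.tensorTensorTensorComm R A A H H).toLinearMap
          ∘ₗ TensorProduct.map hA.comul hH.comul) k
      = TensorProduct.map
          ((TensorProduct.lid R R).toLinearMap ∘ₗ TensorProduct.map f g
            ∘ₗ (TensorProduct.tensorTensorTensorComm R A A H H).toLinearMap) k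
        ∘ₗ TensorProduct.map (TensorProduct.map hA.comul hH.comul) LinearMap.id := by
    rw [← TensorProduct.map_comp, LinearMap.comp_id]
    simp only [LinearMap.comp_assoc]
  have spR : TensorProduct.map f
        ((TensorProduct.lid R R).toLinearMap ∘ₗ TensorProduct.map g k
          ∘ₗ (TensorProduct.tensorTensorTensorComm R A A H H).toLinearMap
          ∘ₗ TensorProduct.map hA.comul hH.comul)
      = TensorProduct.map f
          ((TensorProduct.lid R R).toLinearMap ∘ₗ TensorProduct.map g k
            ∘ₗ (TensorProduct.tensorTensorTensorComm R A A H H).toLinearMap)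
        ∘ₗ TensorProduct.map LinearMap.id (TensorProduct.map hA.comul hH.comul) := by
    rw [← TensorProduct.map_comp, LinearMap.comp_id]
    simp only [LinearMap.comp_assoc]
  rw [spL, spR]
  simp only [LinearMap.comp_apply]
  rw [NA1, NA2]
  rw [map_map_apply, map_map_apply]
  rw [coA, coH]
  have spS : TensorProduct.map
        ((TensorProduct.assoc R A A A).symm.toLinearMap
          ∘ₗ TensorProduct.map LinearMap.id hA.comul ∘ₗ hA.comul)
        ((TensorProduct.assoc R H H H).symm.toLinearMap
          ∘ₗ TensorProduct.map LinearMap.id hH.comul ∘ₗ hH.comul)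
      = TensorProduct.map (TensorProduct.assoc R A A A).symm.toLinearMap
          (TensorProduct.assoc R H H H).symm.toLinearMap
        ∘ₗ TensorProduct.map (TensorProduct.map LinearMap.id hA.comul ∘ₗ hA.comul)
            (TensorProduct.map LinearMap.id hH.comul ∘ₗ hH.comul) := by
    rw [← TensorProduct.map_comp]
  rw [spS]
  simp only [LinearMap.comp_apply]
  have pca := LinearMap.congr_fun PCA
    (TensorProduct.map (TensorProduct.map LinearMap.id hA.comul ∘ₗ hA.comul)
      (TensorProduct.map LinearMap.id hH.comul ∘ₗ hH.comul) c)
  simp only [LinearMap.comp_apply, LinearEquiv.coe_coe] at pca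
  exact pca

end ConvLemmas

section SkewParts

variable {R : Type*} [CommRing R] {A H : Type*}
  [AddCommGroup A] [Module R A] [AddCommGroup H] [Module R H]
variable (hA : HopfQuasigroup R A) (hH : HopfQuasigroup R H)

open HopfQuasigroup

lemma skew_part1 (τ : A ⊗[R] H →ₗ[R] R) (hτ : IsSkewPairing hA hH τ) :
    conv hA hH τ (τ ∘ₗ hA.antipode.rTensor H) = counitT hA hH := by
  obtain ⟨p1, -, -, pH⟩ := hτ
  have NB1 : ∀ w : (A ⊗[R] A) ⊗[R] (H ⊗[R] H),
      TensorProduct.map LinearMap.id (TensorProduct.map hA.antipode LinearMap.id)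
          ((TensorProduct.tensorTensorTensorComm R A A H H) w)
        = (TensorProduct.tensorTensorTensorComm R A A H H)
            (TensorProduct.map (TensorProduct.map LinearMap.id hA.antipode) LinearMap.id w) := by
    intro w
    have := LinearMap.congr_fun
      (ttt_nat (LinearMap.id : A →ₗ[R] A) hA.antipode
        (LinearMap.id : H →ₗ[R] H) (LinearMap.id : H →ₗ[R] H)) w
    simp only [TensorProduct.map_id, LinearMap.comp_apply, LinearEquiv.coe_coe] at this
    exact this.symm
  have mA : hA.mul ∘ₗ TensorProduct.map LinearMap.id hA.antipode ∘ₗ hA.comul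
      = LinearMap.toSpanSingleton R A hA.unit ∘ₗ hA.counit := by
    have := hA.mul_antipode_lT_comul
    simpa only [lT_eq] using this
  have FIN : ∀ c : A ⊗[R] H,
      τ (TensorProduct.map (LinearMap.toSpanSingleton R A hA.unit ∘ₗ hA.counit)
          LinearMap.id c) = counitT hA hH c := by
    intro c
    induction c using TensorProduct.induction_on with
    | zero => simp
    | tmul a h =>
        simp only [TensorProduct.map_tmul, LinearMap.comp_apply,
          LinearMap.toSpanSingleton_apply, LinearMap.id_coe, id_eq]
        rw [← TensorProduct.smul_tmul', map_smul, pH h]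
        simp [counitT, smul_eq_mul]
    | add a b ha hb => simp only [map_add, ha, hb]
  apply LinearMap.ext; intro c
  simp only [conv, comulT, LinearMap.comp_apply, LinearEquiv.coe_coe, rT_eq]
  have sp1 : TensorProduct.map τ (τ ∘ₗ TensorProduct.map hA.antipode LinearMap.id)
      = TensorProduct.map τ τ
        ∘ₗ TensorProduct.map LinearMap.id (TensorProduct.map hA.antipode LinearMap.id) := by
    rw [← TensorProduct.map_comp, LinearMap.comp_id]
  rw [sp1]
  simp only [LinearMap.comp_apply]
  rw [NB1, map_map_apply]
  simp only [LinearMap.comp_id, LinearMap.id_comp]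
  have sp2 : TensorProduct.map
        (TensorProduct.map LinearMap.id hA.antipode ∘ₗ hA.comul) hH.comul
      = TensorProduct.map LinearMap.id hH.comul
        ∘ₗ TensorProduct.map (TensorProduct.map LinearMap.id hA.antipode ∘ₗ hA.comul)
            LinearMap.id := by
    rw [← TensorProduct.map_comp, LinearMap.id_comp, LinearMap.comp_id]
  rw [sp2]
  simp only [LinearMap.comp_apply]
  have p1' := LinearMap.congr_fun p1
    (TensorProduct.map (TensorProduct.map LinearMap.id hA.antipode ∘ₗ hA.comul)
      LinearMap.id c)
  simp only [LinearMap.comp_apply, LinearEquiv.coe_coe, lT_eq, rT_eq] at p1'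
  rw [← p1', map_map_apply]
  simp only [LinearMap.comp_id, LinearMap.id_comp]
  rw [mA]
  exact FIN c

lemma skew_part2 (τ : A ⊗[R] H →ₗ[R] R) (hτ : IsSkewPairing hA hH τ) :
    conv hA hH (τ ∘ₗ hA.antipode.rTensor H) τ = counitT hA hH := by
  obtain ⟨p1, -, -, pH⟩ := hτ
  have NB2 : ∀ w : (A ⊗[R] A) ⊗[R] (H ⊗[R] H),
      TensorProduct.map (TensorProduct.map hA.antipode LinearMap.id) LinearMap.id
          ((TensorProduct.tensorTensorTensorComm R A A H H) w)
        = (TensorProduct.tensorTensorTensorComm R A A H H)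
            (TensorProduct.map (TensorProduct.map hA.antipode LinearMap.id) LinearMap.id w) := by
    intro w
    have := LinearMap.congr_fun
      (ttt_nat hA.antipode (LinearMap.id : A →ₗ[R] A)
        (LinearMap.id : H →ₗ[R] H) (LinearMap.id : H →ₗ[R] H)) w
    simp only [TensorProduct.map_id, LinearMap.comp_apply, LinearEquiv.coe_coe] at this
    exact this.symm
  have mA : hA.mul ∘ₗ TensorProduct.map hA.antipode LinearMap.id ∘ₗ hA.comul
      = LinearMap.toSpanSingleton R A hA.unit ∘ₗ hA.counit := by
    have := hA.mul_antipode_rT_comul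
    simpa only [rT_eq] using this
  have FIN : ∀ c : A ⊗[R] H,
      τ (TensorProduct.map (LinearMap.toSpanSingleton R A hA.unit ∘ₗ hA.counit)
          LinearMap.id c) = counitT hA hH c := by
    intro c
    induction c using TensorProduct.induction_on with
    | zero => simp
    | tmul a h =>
        simp only [TensorProduct.map_tmul, LinearMap.comp_apply,
          LinearMap.toSpanSingleton_apply, LinearMap.id_coe, id_eq]
        rw [← TensorProduct.smul_tmul', map_smul, pH h]
        simp [counitT, smul_eq_mul]
    | add a b ha hb => simp only [map_add, ha, hb]
  apply LinearMap.ext; intro c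
  simp only [conv, comulT, LinearMap.comp_apply, LinearEquiv.coe_coe, rT_eq]
  have sp1 : TensorProduct.map (τ ∘ₗ TensorProduct.map hA.antipode LinearMap.id) τ
      = TensorProduct.map τ τ
        ∘ₗ TensorProduct.map (TensorProduct.map hA.antipode LinearMap.id) LinearMap.id := by
    rw [← TensorProduct.map_comp, LinearMap.comp_id]
  rw [sp1]
  simp only [LinearMap.comp_apply]
  rw [NB2, map_map_apply]
  simp only [LinearMap.comp_id, LinearMap.id_comp]
  have sp2 : TensorProduct.map
        (TensorProduct.map hA.antipode LinearMap.id ∘ₗ hA.comul) hH.comul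
      = TensorProduct.map LinearMap.id hH.comul
        ∘ₗ TensorProduct.map (TensorProduct.map hA.antipode LinearMap.id ∘ₗ hA.comul)
            LinearMap.id := by
    rw [← TensorProduct.map_comp, LinearMap.id_comp, LinearMap.comp_id]
  rw [sp2]
  simp only [LinearMap.comp_apply]
  have p1' := LinearMap.congr_fun p1
    (TensorProduct.map (TensorProduct.map hA.antipode LinearMap.id ∘ₗ hA.comul)
      LinearMap.id c)
  simp only [LinearMap.comp_apply, LinearEquiv.coe_coe, lT_eq, rT_eq] at p1'
  rw [← p1', map_map_apply]
  simp only [LinearMap.comp_id, LinearMap.id_comp]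
  rw [mA]
  exact FIN c

lemma skew_part3 (τ : A ⊗[R] H →ₗ[R] R) (hτ : IsSkewPairing hA hH τ) :
    conv hA hH (τ ∘ₗ hA.antipode.rTensor H)
      ((τ ∘ₗ hA.antipode.rTensor H) ∘ₗ hH.antipode.lTensor A) = counitT hA hH := by
  obtain ⟨-, p2, pA, -⟩ := hτ
  have sσ : (τ ∘ₗ hA.antipode.rTensor H) ∘ₗ hH.antipode.lTensor A
      = τ ∘ₗ TensorProduct.map hA.antipode hH.antipode := by
    simp only [rT_eq, lT_eq, LinearMap.comp_assoc]
    rw [← TensorProduct.map_comp, LinearMap.id_comp, LinearMap.comp_id]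
  have NB3 : ∀ w : (A ⊗[R] A) ⊗[R] (H ⊗[R] H),
      TensorProduct.map (TensorProduct.map hA.antipode LinearMap.id)
          (TensorProduct.map hA.antipode hH.antipode)
          ((TensorProduct.tensorTensorTensorComm R A A H H) w)
        = (TensorProduct.tensorTensorTensorComm R A A H H)
            (TensorProduct.map (TensorProduct.map hA.antipode hA.antipode)
              (TensorProduct.map LinearMap.id hH.antipode) w) := by
    intro w
    have := LinearMap.congr_fun
      (ttt_nat hA.antipode hA.antipode (LinearMap.id : H →ₗ[R] H) hH.antipode) w
    simp only [TensorProduct.map_id, LinearMap.comp_apply, LinearEquiv.coe_coe] at this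
    exact this.symm
  have mH : hH.mul ∘ₗ TensorProduct.map LinearMap.id hH.antipode ∘ₗ hH.comul
      = LinearMap.toSpanSingleton R H hH.unit ∘ₗ hH.counit := by
    have := hH.mul_antipode_lT_comul
    simpa only [lT_eq] using this
  have FIN : ∀ c : A ⊗[R] H,
      τ (TensorProduct.map hA.antipode
          (LinearMap.toSpanSingleton R H hH.unit ∘ₗ hH.counit) c) = counitT hA hH c := by
    intro c
    induction c using TensorProduct.induction_on with
    | zero => simp
    | tmul a h =>
        simp only [TensorProduct.map_tmul, LinearMap.comp_apply,
          LinearMap.toSpanSingleton_apply]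
        rw [TensorProduct.tmul_smul, map_smul, pA (hA.antipode a)]
        have := LinearMap.congr_fun hA.counit_antipode a
        simp only [LinearMap.comp_apply] at this
        rw [this]
        simp [counitT, smul_eq_mul, mul_comm]
    | add a b ha hb => simp only [map_add, ha, hb]
  apply LinearMap.ext; intro c
  rw [sσ]
  simp only [conv, comulT, LinearMap.comp_apply, LinearEquiv.coe_coe, rT_eq]
  have sp1 : TensorProduct.map (τ ∘ₗ TensorProduct.map hA.antipode LinearMap.id)
        (τ ∘ₗ TensorProduct.map hA.antipode hH.antipode)
      = TensorProduct.map τ τ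
        ∘ₗ TensorProduct.map (TensorProduct.map hA.antipode LinearMap.id)
            (TensorProduct.map hA.antipode hH.antipode) := by
    rw [← TensorProduct.map_comp]
  rw [sp1]
  simp only [LinearMap.comp_apply]
  rw [NB3, map_map_apply]
  rw [hA.map_antipode_comul]
  have sp2 : TensorProduct.map
        ((TensorProduct.comm R A A).toLinearMap ∘ₗ hA.comul ∘ₗ hA.antipode)
        (TensorProduct.map LinearMap.id hH.antipode ∘ₗ hH.comul)
      = TensorProduct.map ((TensorProduct.comm R A A).toLinearMap ∘ₗ hA.comul)
          LinearMap.id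
        ∘ₗ TensorProduct.map hA.antipode
            (TensorProduct.map LinearMap.id hH.antipode ∘ₗ hH.comul) := by
    rw [← TensorProduct.map_comp, LinearMap.id_comp]
    simp only [LinearMap.comp_assoc]
  rw [sp2]
  simp only [LinearMap.comp_apply]
  have p2' := LinearMap.congr_fun p2
    (TensorProduct.map hA.antipode
      (TensorProduct.map LinearMap.id hH.antipode ∘ₗ hH.comul) c)
  simp only [LinearMap.comp_apply, LinearEquiv.coe_coe, lT_eq, rT_eq] at p2'
  rw [← p2', map_map_apply]
  simp only [LinearMap.comp_id, LinearMap.id_comp]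
  rw [mH]
  exact FIN c

end SkewParts

/-- A skew pairing `τ` between Hopf quasigroups `A` and `H` is convolution invertible,
with inverse `τ⁻¹ = τ ∘ (λ_A ⊗ H)`; moreover `τ = τ⁻¹ ∘ (A ⊗ λ_H)`. -/
theorem skewPairing_convolution_invertible {R : Type*} [CommRing R] {A H : Type*}
    [AddCommGroup A] [Module R A] [AddCommGroup H] [Module R H]
    (hA : HopfQuasigroup R A) (hH : HopfQuasigroup R H) (τ : A ⊗[R] H →ₗ[R] R)
    (hτ : IsSkewPairing hA hH τ) :
    conv hA hH τ (τ ∘ₗ hA.antipode.rTensor H) = counitT hA hH ∧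
    conv hA hH (τ ∘ₗ hA.antipode.rTensor H) τ = counitT hA hH ∧
    τ = (τ ∘ₗ hA.antipode.rTensor H) ∘ₗ hH.antipode.lTensor A := by
  refine ⟨skew_part1 hA hH τ hτ, skew_part2 hA hH τ hτ, ?_⟩
  have c1 := skew_part1 hA hH τ hτ
  have c3 := skew_part3 hA hH τ hτ
  calc τ = conv hA hH τ (counitT hA hH) := (conv_counitT_right hA hH τ).symm
    _ = conv hA hH τ (conv hA hH (τ ∘ₗ hA.antipode.rTensor H)
          ((τ ∘ₗ hA.antipode.rTensor H) ∘ₗ hH.antipode.lTensor A)) := by rw [c3]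
    _ = conv hA hH (conv hA hH τ (τ ∘ₗ hA.antipode.rTensor H))
          ((τ ∘ₗ hA.antipode.rTensor H) ∘ₗ hH.antipode.lTensor A) :=
        (conv_assoc hA hH _ _ _).symm
    _ = conv hA hH (counitT hA hH)
          ((τ ∘ₗ hA.antipode.rTensor H) ∘ₗ hH.antipode.lTensor A) := by rw [c1]
    _ = (τ ∘ₗ hA.antipode.rTensor H) ∘ₗ hH.antipode.lTensor A :=
        conv_counitT_left hA hH _
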